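/- Let G ⪰ 0 be a symmetric positive semidefinite n×n matrix with ‖G‖ ≤ g, let F, F̃ ∈ ℝ^{n×m}, and let 0 < τ ≤ 1/(4g). Then −τ F̃ᵀ F − τ Fᵀ F̃ + τ² F̃ᵀ G F̃ ⪯ (4τ + 4τ² g)(F̃ − F)ᵀ(F̃ − F) − (τ/4) Fᵀ F, in the positive semidefinite order on symmetric m×m matrices. -/

import Mathlib

open Matrix
open scoped Matrix.Norms.L2Operator

private lemma psd_smul' {k : ℕ} {M : Matrix (Fin k) (Fin k) ℝ} (h : M.PosSemidef) {c : ℝ}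
    (hc : 0 ≤ c) : (c • M).PosSemidef := by
  refine Matrix.PosSemidef.of_dotProduct_mulVec_nonneg ?_ ?_
  · rw [Matrix.IsHermitian, Matrix.conjTranspose_smul, h.1, star_trivial]
  · intro x
    simp only [Matrix.smul_mulVec, dotProduct_smul, smul_eq_mul]
    exact mul_nonneg hc (h.dotProduct_mulVec_nonneg x)

private lemma psd_gsmul_sub {k : ℕ} {G : Matrix (Fin k) (Fin k) ℝ} {g : ℝ}
    (hG : G.PosSemidef) (hGn : ‖G‖ ≤ g) :
    ((g • (1 : Matrix (Fin k) (Fin k) ℝ)) - G).PosSemidef := by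
  have hg0 : 0 ≤ g := le_trans (norm_nonneg G) hGn
  refine Matrix.PosSemidef.of_dotProduct_mulVec_nonneg ?_ ?_
  · refine Matrix.IsHermitian.sub ?_ hG.1
    rw [Matrix.IsHermitian, Matrix.conjTranspose_smul, star_trivial, Matrix.conjTranspose_one]
  · intro x
    set y : EuclideanSpace ℝ (Fin k) := (WithLp.equiv 2 _).symm x with hy
    have h1 : dotProduct (star x) x = ‖y‖ ^ 2 := by
      rw [← real_inner_self_eq_norm_sq, hy, WithLp.equiv_symm_apply, EuclideanSpace.inner_toLp_toLp,
        star_trivial]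
    have h2 : dotProduct (star x) (G *ᵥ x) ≤ g * ‖y‖ ^ 2 := by
      have hcs : dotProduct (star x) (G *ᵥ x)
          ≤ ‖y‖ * ‖(WithLp.equiv 2 _).symm (G *ᵥ x)‖ := by
        rw [star_trivial, dotProduct_comm, hy, WithLp.equiv_symm_apply]
        have := real_inner_le_norm (WithLp.toLp 2 x) (WithLp.toLp 2 (G *ᵥ x))
        rw [EuclideanSpace.inner_toLp_toLp, star_trivial] at this
        exact this
      have hop := G.l2_opNorm_mulVec y
      have hGy : ‖(WithLp.equiv 2 (Fin k → ℝ)).symm (G *ᵥ x)‖ ≤ g * ‖y‖ := by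
        refine le_trans ?_ (mul_le_mul_of_nonneg_right hGn (norm_nonneg y))
        exact hop
      nlinarith [norm_nonneg y]
    rw [Matrix.sub_mulVec, dotProduct_sub, Matrix.smul_mulVec,
      Matrix.one_mulVec, dotProduct_smul, smul_eq_mul, h1]
    linarith

/-- Core matrix inequality of the descent lemma: for PSD `G` with `‖G‖ ≤ g` and
`0 < τ ≤ 1/(4g)`,
`−τ F̃ᵀF − τ FᵀF̃ + τ² F̃ᵀGF̃ ⪯ (4τ + 4τ²g)(F̃−F)ᵀ(F̃−F) − (τ/4) FᵀF`. -/
theorem stmt16 {n m : ℕ} (G : Matrix (Fin n) (Fin n) ℝ)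
    (F Ft : Matrix (Fin n) (Fin m) ℝ) (g τ : ℝ)
    (hG : G.PosSemidef) (hGn : ‖G‖ ≤ g) (hg : 0 < g)
    (hτ0 : 0 < τ) (hτ : τ ≤ 1 / (4 * g)) :
    (((4 * τ + 4 * τ ^ 2 * g) • ((Ft - F)ᵀ * (Ft - F)) - (τ / 4) • (Fᵀ * F)) -
      (-(τ • (Ftᵀ * F)) - τ • (Fᵀ * Ft) + (τ ^ 2) • (Ftᵀ * G * Ft))).PosSemidef := by
  have hτg : τ * g ≤ 1 / 4 := by
    rw [le_div_iff₀ (by positivity)] at hτ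
    linarith
  set A : Matrix (Fin n) (Fin m) ℝ := (2 : ℝ) • (Ft - F) + (1/2 : ℝ) • F with hA
  have key : (((4 * τ + 4 * τ ^ 2 * g) • ((Ft - F)ᵀ * (Ft - F)) - (τ / 4) • (Fᵀ * F)) -
      (-(τ • (Ftᵀ * F)) - τ • (Fᵀ * Ft) + (τ ^ 2) • (Ftᵀ * G * Ft)))
      = (τ ^ 2) • (Ftᵀ * ((g • (1 : Matrix (Fin n) (Fin n) ℝ)) - G) * Ft)
        + (τ - τ ^ 2 * g) • (Aᵀ * A)
        + (7 * τ ^ 2 * g) • ((Ft - F)ᵀ * (Ft - F))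
        + (3 * τ / 2 - 3 / 4 * (τ ^ 2 * g)) • (Fᵀ * F) := by
    rw [hA]
    simp only [Matrix.transpose_sub, Matrix.transpose_add, Matrix.transpose_smul,
      Matrix.sub_mul, Matrix.mul_sub, Matrix.add_mul, Matrix.mul_add,
      Matrix.smul_mul, Matrix.mul_smul, Matrix.mul_one, smul_sub, smul_add]
    module
  rw [key]
  have h1 : ((τ ^ 2) • (Ftᵀ * ((g • (1 : Matrix (Fin n) (Fin n) ℝ)) - G) * Ft)).PosSemidef := by
    apply psd_smul' _ (by positivity)
    have := (psd_gsmul_sub hG hGn).conjTranspose_mul_mul_same Ft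
    simpa [Matrix.conjTranspose_eq_transpose_of_trivial] using this
  have h2 : ((τ - τ ^ 2 * g) • (Aᵀ * A)).PosSemidef := by
    apply psd_smul' _ (by nlinarith)
    have := Matrix.posSemidef_conjTranspose_mul_self A
    simpa [Matrix.conjTranspose_eq_transpose_of_trivial] using this
  have h3 : ((7 * τ ^ 2 * g) • ((Ft - F)ᵀ * (Ft - F))).PosSemidef := by
    apply psd_smul' _ (by positivity)
    have := Matrix.posSemidef_conjTranspose_mul_self (Ft - F)
    simpa [Matrix.conjTranspose_eq_transpose_of_trivial] using this
  have h4 : ((3 * τ / 2 - 3 / 4 * (τ ^ 2 * g)) • (Fᵀ * F)).PosSemidef := by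
    apply psd_smul' _ (by nlinarith)
    have := Matrix.posSemidef_conjTranspose_mul_self F
    simpa [Matrix.conjTranspose_eq_transpose_of_trivial] using this
  exact ((h1.add h2).add h3).add h4
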